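/- For reals $a, b > 1$, the inequality $ab - \sqrt{(a^2-1)(b^2-1)} \geq \dfrac{a^2 + b^2 + a + b}{2ab + a + b}$ holds. -/

import Mathlib

theorem sqrt_ineq_ab
    (a b : ℝ) (ha : 1 < a) (hb : 1 < b) :
    a * b - Real.sqrt ((a ^ 2 - 1) * (b ^ 2 - 1))
      ≥ (a ^ 2 + b ^ 2 + a + b) / (2 * a * b + a + b) := by
  have hD : (0:ℝ) < 2 * a * b + a + b := by nlinarith
  set N : ℝ := a * b * (2 * a * b + a + b) - (a ^ 2 + b ^ 2 + a + b) with hN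
  have hNpos : 0 ≤ N := by nlinarith [mul_pos (mul_pos (sub_pos.mpr ha) (sub_pos.mpr hb)) hD]
  have key : (a ^ 2 - 1) * (b ^ 2 - 1) * (2 * a * b + a + b) ^ 2 ≤ N ^ 2 := by
    nlinarith [mul_nonneg (mul_nonneg (mul_nonneg (sq_nonneg (a - b))
      (by linarith : (0:ℝ) ≤ a + b)) (by linarith : (0:ℝ) ≤ a + 1))
      (by linarith : (0:ℝ) ≤ b + 1)]
  have hx' : (a ^ 2 - 1) * (b ^ 2 - 1) ≤ (N / (2 * a * b + a + b)) ^ 2 := by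
    rw [div_pow, le_div_iff₀ (by positivity)]
    exact key
  have hy' : 0 ≤ N / (2 * a * b + a + b) := div_nonneg hNpos hD.le
  have h1 : Real.sqrt ((a ^ 2 - 1) * (b ^ 2 - 1)) ≤ N / (2 * a * b + a + b) :=
    calc Real.sqrt ((a ^ 2 - 1) * (b ^ 2 - 1)) ≤ Real.sqrt ((N / (2 * a * b + a + b)) ^ 2) :=
          Real.sqrt_le_sqrt hx'
      _ = N / (2 * a * b + a + b) := Real.sqrt_sq hy'
  have h2 : N / (2 * a * b + a + b) = a * b - (a ^ 2 + b ^ 2 + a + b) / (2 * a * b + a + b) := by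
    field_simp
    linarith [hN]
  linarith [h1, h2 ▸ h1]
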